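/- Let H = (V,E) be a finite simple graph, let t ≥ 1 be an integer, and let 𝒞 be a t-biclique covering of H of size k. Let E' ⊆ E be the set of edges of H that are covered by 𝒞 exactly t times. Then the graph H' = (V, E') satisfies bp(H') ≤ (2k)^t. -/

import Mathlib

/-- A partition of the edge set of a simple graph `G` into `k` bicliques. -/
def IsBicliquePartition {V : Type*} (G : SimpleGraph V) (k : ℕ)
    (A B : Fin k → Set V) : Prop :=
  (∀ i, ∀ x ∈ A i, ∀ y ∈ B i, G.Adj x y) ∧
  ∀ x y, G.Adj x y → ∃! i, (x ∈ A i ∧ y ∈ B i) ∨ (y ∈ A i ∧ x ∈ B i)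

/-- The biclique partition number of a graph. -/
noncomputable def bp {V : Type*} (G : SimpleGraph V) : ℕ :=
  sInf {k | ∃ A B : Fin k → Set V, IsBicliquePartition G k A B}

/-- The number of times the collection of bicliques `(A i, B i)` covers the
(oriented versions of the) edge `{x, y}`: the biclique `(A i, B i)` covers the
oriented edge `(x, y)` when `x ∈ A i` and `y ∈ B i`. -/
def covCount {V : Type*} [DecidableEq V] {k : ℕ}
    (A B : Fin k → Finset V) (x y : V) : ℕ :=
  (Finset.univ.filter fun i => x ∈ A i ∧ y ∈ B i).card +
  (Finset.univ.filter fun i => y ∈ A i ∧ x ∈ B i).card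

namespace Stmt12Aux

open Finset

variable {V : Type*} [DecidableEq V] {k : ℕ}

/-- Left side of an oriented biclique. -/
def lft (A B : Fin k → Finset V) (o : Fin k × Bool) : Finset V :=
  if o.2 then A o.1 else B o.1

/-- Right side of an oriented biclique. -/
def rgt (A B : Fin k → Finset V) (o : Fin k × Bool) : Finset V :=
  if o.2 then B o.1 else A o.1

/-- Reverse the orientation. -/
def flipO (o : Fin k × Bool) : Fin k × Bool := (o.1, !o.2)

lemma flipO_flipO (o : Fin k × Bool) : flipO (flipO o) = o := by
  simp [flipO]

lemma flipO_injective : Function.Injective (flipO (k := k)) :=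
  Function.Involutive.injective flipO_flipO

/-- The set of oriented bicliques covering the oriented edge `(x, y)`. -/
def Scov (A B : Fin k → Finset V) (x y : V) : Finset (Fin k × Bool) :=
  Finset.univ.filter fun o => x ∈ lft A B o ∧ y ∈ rgt A B o

lemma card_Scov (A B : Fin k → Finset V) (x y : V) :
    (Scov A B x y).card = covCount A B x y := by
  classical
  rw [Scov, covCount, Finset.card_filter, Fintype.sum_prod_type]
  simp only [Fintype.sum_bool, Finset.sum_add_distrib]
  congr 1
  · rw [Finset.card_filter]
    simp [lft, rgt]
  · rw [Finset.card_filter]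
    simp [lft, rgt, and_comm]

lemma mem_Scov_flip {A B : Fin k → Finset V} {x y : V} {o : Fin k × Bool} :
    o ∈ Scov A B x y ↔ flipO o ∈ Scov A B y x := by
  obtain ⟨i, b⟩ := o
  cases b <;> simp only [Scov, Finset.mem_filter, Finset.mem_univ, true_and] <;> simp [lft, rgt, flipO, and_comm]

lemma Scov_swap (A B : Fin k → Finset V) (x y : V) :
    Scov A B y x = (Scov A B x y).image flipO := by
  ext o
  simp only [Finset.mem_image]
  constructor
  · intro h
    exact ⟨flipO o, mem_Scov_flip.2 (by rwa [flipO_flipO]), flipO_flipO o⟩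
  · rintro ⟨p, hp, rfl⟩
    exact mem_Scov_flip.1 hp

/-- An injective encoding of finsets of oriented bicliques into `ℕ`. -/
noncomputable def enc (s : Finset (Fin k × Bool)) : ℕ :=
  (Fintype.equivFin (Finset (Fin k × Bool)) s : ℕ)

lemma enc_injective : Function.Injective (enc (k := k)) := by
  intro s t h
  exact (Fintype.equivFin (Finset (Fin k × Bool))).injective (Fin.val_injective h)

/-- Canonical representative of the pair `{s, s.image flipO}`. -/
noncomputable def pick (s : Finset (Fin k × Bool)) : Finset (Fin k × Bool) :=
  if enc s ≤ enc (s.image flipO) then s else s.image flipO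

lemma pick_eq_or (s : Finset (Fin k × Bool)) :
    pick s = s ∨ pick s = s.image flipO := by
  unfold pick
  split
  · exact Or.inl rfl
  · exact Or.inr rfl

lemma image_flipO_image_flipO (s : Finset (Fin k × Bool)) :
    (s.image flipO).image flipO = s := by
  rw [Finset.image_image]
  have : flipO (k := k) ∘ flipO = id := funext flipO_flipO
  rw [this, Finset.image_id]

lemma pick_image_flipO (s : Finset (Fin k × Bool)) :
    pick (s.image flipO) = pick s := by
  unfold pick
  rw [image_flipO_image_flipO]
  rcases lt_trichotomy (enc s) (enc (s.image flipO)) with h | h | h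
  · rw [if_pos h.le, if_neg (not_le.2 h)]
  · have := enc_injective h
    rw [← this]
  · rw [if_neg (not_le.2 h), if_pos h.le]

lemma pick_idem (s : Finset (Fin k × Bool)) : pick (pick s) = pick s := by
  rcases pick_eq_or s with h | h
  · rw [h]; exact h
  · rw [h, pick_image_flipO]; exact h

attribute [irreducible] pick enc

end Stmt12Aux

set_option maxHeartbeats 1000000 in
open Stmt12Aux Finset in
/-- If `𝒞 = (A i, B i)_{i < k}` is a `t`-biclique covering of a finite simple graph
`H` (each edge is covered at least once and at most `t` times), and `H'` is the
subgraph of `H` consisting of the edges covered exactly `t` times, then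
`bp(H') ≤ (2k)^t`. -/
theorem stmt12 {V : Type*} [Fintype V] [DecidableEq V] (H : SimpleGraph V)
    (t k : ℕ) (ht : 1 ≤ t) (A B : Fin k → Finset V)
    (hbic : ∀ i, ∀ x ∈ A i, ∀ y ∈ B i, H.Adj x y)
    (hcov : ∀ x y, H.Adj x y → 1 ≤ covCount A B x y ∧ covCount A B x y ≤ t) :
    bp (SimpleGraph.fromRel fun x y => H.Adj x y ∧ covCount A B x y = t)
      ≤ (2 * k) ^ t := by
  classical
  set N := (2 * k) ^ t with hN
  -- the index type: finsets of oriented bicliques of cardinality t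
  have hcardT : Fintype.card {s : Finset (Fin k × Bool) // s.card = t} ≤ N := by
    rw [Fintype.card_finset_len]
    have h2k : Fintype.card (Fin k × Bool) = 2 * k := by
      simp [mul_comm]
    rw [h2k]
    exact Nat.choose_le_pow _ _
  obtain ⟨ι⟩ : Nonempty ({s : Finset (Fin k × Bool) // s.card = t} ↪ Fin N) :=
    Function.Embedding.nonempty_of_card_le (by rwa [Fintype.card_fin])
  set A' : Fin N → Set V := fun j =>
    {x | ∃ s : {s : Finset (Fin k × Bool) // s.card = t},
      ι s = j ∧ pick s.1 = s.1 ∧ ∀ o ∈ s.1, x ∈ lft A B o} with hA'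
  set B' : Fin N → Set V := fun j =>
    {y | ∃ s : {s : Finset (Fin k × Bool) // s.card = t},
      ι s = j ∧ pick s.1 = s.1 ∧ ∀ o ∈ s.1, y ∈ rgt A B o} with hB'
  apply Nat.sInf_le
  refine ⟨A', B', ?_, ?_⟩
  · -- each piece is a biclique of the subgraph
    intro j x hx y hy
    obtain ⟨s, hsj, hspick, hxs⟩ := hx
    obtain ⟨s', hs'j, _, hys⟩ := hy
    have hss' : s = s' := ι.injective (hsj.trans hs'j.symm)
    subst hss'
    have hsub : s.1 ⊆ Scov A B x y := by
      intro o ho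
      exact Finset.mem_filter.2 ⟨Finset.mem_univ _, hxs o ho, hys o ho⟩
    have hne : s.1.Nonempty := by
      rw [← Finset.card_pos, s.2]; omega
    obtain ⟨o, ho⟩ := hne
    have hadj : H.Adj x y := by
      have hxo := hxs o ho
      have hyo := hys o ho
      obtain ⟨i, b⟩ := o
      cases b
      · simp only [lft, rgt, if_neg Bool.false_ne_true] at hxo hyo
        exact (hbic i y hyo x hxo).symm
      · simp only [lft, rgt, if_pos rfl] at hxo hyo
        exact hbic i x hxo y hyo
    have hle := (hcov x y hadj).2
    have hge : t ≤ covCount A B x y := by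
      rw [← card_Scov]
      calc t = s.1.card := s.2.symm
        _ ≤ _ := Finset.card_le_card hsub
    rw [SimpleGraph.fromRel_adj]
    exact ⟨hadj.ne, Or.inl ⟨hadj, le_antisymm hle hge⟩⟩
  · -- each edge of the subgraph is covered exactly once
    intro x y hxy
    rw [SimpleGraph.fromRel_adj] at hxy
    obtain ⟨hne, hc⟩ := hxy
    have hsymm : covCount A B x y = covCount A B y x := by
      rw [covCount, covCount, add_comm]
    obtain ⟨hadj, hct⟩ : H.Adj x y ∧ covCount A B x y = t := by
      rcases hc with h | h
      · exact h
      · exact ⟨h.1.symm, hsymm.trans h.2⟩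
    set s₀ := Scov A B x y with hs₀
    have hcard₀ : s₀.card = t := by rw [hs₀, card_Scov]; exact hct
    have hswap : Scov A B y x = s₀.image flipO := Scov_swap A B x y
    have hcard₀' : (s₀.image flipO).card = t := by
      rw [Finset.card_image_of_injective _ flipO_injective]; exact hcard₀
    have hucard : (pick s₀).card = t := by
      rcases pick_eq_or s₀ with h | h <;> rw [h] <;> assumption
    have hupick : pick (pick s₀) = pick s₀ := pick_idem s₀
    refine ⟨ι ⟨pick s₀, hucard⟩, ?_, ?_⟩
    · rcases pick_eq_or s₀ with h | h
      · left
        refine ⟨⟨⟨pick s₀, hucard⟩, rfl, hupick, ?_⟩,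
          ⟨⟨pick s₀, hucard⟩, rfl, hupick, ?_⟩⟩ <;>
        · intro o ho
          have ho' : o ∈ pick s₀ := ho
          rw [h] at ho'
          have := Finset.mem_filter.1 ho'
          tauto
      · right
        refine ⟨⟨⟨pick s₀, hucard⟩, rfl, hupick, ?_⟩,
          ⟨⟨pick s₀, hucard⟩, rfl, hupick, ?_⟩⟩ <;>
        · intro o ho
          have ho' : o ∈ pick s₀ := ho
          rw [h, ← hswap] at ho'
          have := Finset.mem_filter.1 ho'
          tauto
    · rintro j (⟨⟨s, hsj, hspick, hxs⟩, ⟨s', hs'j, _, hys⟩⟩ |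
        ⟨⟨s, hsj, hspick, hys⟩, ⟨s', hs'j, _, hxs⟩⟩)
      · have hss' : s = s' := ι.injective (hsj.trans hs'j.symm)
        subst hss'
        have hsub : s.1 ⊆ s₀ := by
          intro o ho
          exact Finset.mem_filter.2 ⟨Finset.mem_univ _, hxs o ho, hys o ho⟩
        have hseq : s.1 = s₀ :=
          Finset.eq_of_subset_of_card_le hsub (by rw [hcard₀, s.2])
        have : pick s₀ = s.1 := by rw [← hseq, hspick]
        rw [← hsj]
        congr 1
        exact Subtype.ext this.symm
      · have hss' : s = s' := ι.injective (hsj.trans hs'j.symm)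
        subst hss'
        have hsub : s.1 ⊆ Scov A B y x := by
          intro o ho
          exact Finset.mem_filter.2 ⟨Finset.mem_univ _, hys o ho, hxs o ho⟩
        have hseq : s.1 = s₀.image flipO := by
          rw [← hswap]
          refine Finset.eq_of_subset_of_card_le hsub ?_
          rw [hswap, hcard₀', s.2]
        have : pick s₀ = s.1 := by
          rw [← pick_image_flipO, ← hseq, hspick]
        rw [← hsj]
        congr 1
        exact Subtype.ext this.symm
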